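/- Let e : ι → H and f : κ → H be orthonormal bases of H (ι, κ finite types), with associated classical structures δ_e and δ_f. Then the following are equivalent: (i) every subspace K of H that is copyable along both δ_e and δ_f satisfies K = ⊥ or K = ⊤ (i.e. δ_e and δ_f are partially complementary); (ii) every subspace that is simultaneously the span of a subset of { e i | i : ι } and the span of a subset of { f j | j : κ } equals ⊥ or ⊤ (i.e. the Boolean algebras of copyable subspaces are partially complementary). -/

import Mathlib

open scoped TensorProduct InnerProductSpace

/-- The orthogonal projection of `H` onto the subspace `K`, regarded as an endomorphism
`P_K : H →ₗ[ℂ] H`. -/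
noncomputable def projL {H : Type*} [NormedAddCommGroup H] [InnerProductSpace ℂ H]
    [FiniteDimensional ℂ H] (K : Submodule ℂ H) : H →ₗ[ℂ] H :=
  K.subtype ∘ₗ K.orthogonalProjectionOnto.toLinearMap

/-- The classical structure `δ_e : H →ₗ[ℂ] H ⊗[ℂ] H` associated with an orthonormal basis
`e`, determined by `δ_e x = ∑ i, ⟪e i, x⟫_ℂ • (e i ⊗ₜ e i)`. -/
noncomputable def delta {ι H : Type*} [Fintype ι] [NormedAddCommGroup H]
    [InnerProductSpace ℂ H] (e : ι → H) : H →ₗ[ℂ] H ⊗[ℂ] H :=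
  ∑ i, (innerSL ℂ (e i)).toLinearMap.smulRight (e i ⊗ₜ[ℂ] e i)

/-- A subspace `K` of `H` is copyable along `δ_e` if `δ_e ∘ₗ P_K = (P_K ⊗ P_K) ∘ₗ δ_e`. -/
def Copyable {ι H : Type*} [Fintype ι] [NormedAddCommGroup H] [InnerProductSpace ℂ H]
    [FiniteDimensional ℂ H] (e : ι → H) (K : Submodule ℂ H) : Prop :=
  delta e ∘ₗ projL K = TensorProduct.map (projL K) (projL K) ∘ₗ delta e

section aux
variable {ι H : Type*} [Fintype ι] [NormedAddCommGroup H] [InnerProductSpace ℂ H]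
  [FiniteDimensional ℂ H]

lemma projL_mem (K : Submodule ℂ H) (x : H) : projL K x ∈ K := (K.orthogonalProjectionOnto x).2

lemma projL_eq_self (K : Submodule ℂ H) {x : H} (hx : x ∈ K) : projL K x = x :=
  congrArg Subtype.val (Submodule.orthogonalProjectionOnto_mem_subspace_eq_self (⟨x, hx⟩ : K))

lemma projL_idem (K : Submodule ℂ H) (x : H) : projL K (projL K x) = projL K x :=
  projL_eq_self K (projL_mem K x)

lemma projL_symm (K : Submodule ℂ H) (x y : H) :
    ⟪projL K x, y⟫_ℂ = ⟪x, projL K y⟫_ℂ :=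
  K.starProjection_isSymmetric x y

lemma projL_orthogonal (K : Submodule ℂ H) {x : H} (hx : x ∈ Kᗮ) : projL K x = 0 := by
  have := Submodule.orthogonalProjectionOnto_apply_of_mem_orthogonal (K := K) hx
  simp [projL, this]

set_option linter.unusedSectionVars false in
lemma delta_apply (e : OrthonormalBasis ι ℂ H) (x : H) :
    delta (⇑e) x = ∑ i, ⟪e i, x⟫_ℂ • (e i ⊗ₜ[ℂ] e i) := by
  simp [delta, LinearMap.sum_apply]

lemma delta_apply_basis (e : OrthonormalBasis ι ℂ H) (i : ι) :
    delta (⇑e) (e i) = e i ⊗ₜ[ℂ] e i := by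
  classical
  rw [delta_apply]
  rw [Finset.sum_eq_single i]
  · rw [orthonormal_iff_ite.mp e.orthonormal]; simp
  · intro j _ hj
    rw [orthonormal_iff_ite.mp e.orthonormal]
    simp [hj]
  · simp

end aux

section main
variable {ι H : Type*} [Fintype ι] [NormedAddCommGroup H] [InnerProductSpace ℂ H]
  [FiniteDimensional ℂ H]

lemma coordL [DecidableEq ι] (e : OrthonormalBasis ι ℂ H) (y : H) (j k : ι) :
    (e.toBasis.tensorProduct e.toBasis).repr (delta (⇑e) y) (j, k) =
      if j = k then ⟪e j, y⟫_ℂ else 0 := by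
  classical
  rw [delta_apply, map_sum, Finsupp.finset_sum_apply]
  have hterm : ∀ m ∈ Finset.univ,
      ((e.toBasis.tensorProduct e.toBasis).repr (⟪e m, y⟫_ℂ • (e m ⊗ₜ[ℂ] e m))) (j, k) =
        if j = m then (if k = m then ⟪e m, y⟫_ℂ else 0) else 0 := by
    intro m _
    rw [map_smul, Finsupp.smul_apply, Module.Basis.tensorProduct_repr_tmul_apply,
      e.coe_toBasis_repr_apply, e.coe_toBasis_repr_apply,
      OrthonormalBasis.repr_apply_apply, OrthonormalBasis.repr_apply_apply,
      orthonormal_iff_ite.mp e.orthonormal, orthonormal_iff_ite.mp e.orthonormal,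
      smul_eq_mul]
    by_cases h1 : j = m <;> by_cases h2 : k = m <;> simp [h1, h2]
  rw [Finset.sum_congr rfl hterm, Finset.sum_ite_eq]
  by_cases h : j = k
  · subst h; simp
  · simp [h, Ne.symm h]

lemma coordR (e : OrthonormalBasis ι ℂ H) (x y : H) (j k : ι) :
    (e.toBasis.tensorProduct e.toBasis).repr (x ⊗ₜ[ℂ] y) (j, k) =
      ⟪e k, y⟫_ℂ * ⟪e j, x⟫_ℂ := by
  simp [Module.Basis.tensorProduct_repr_tmul_apply, e.coe_toBasis_repr_apply,
    OrthonormalBasis.repr_apply_apply]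

lemma copyable_iff_span (e : OrthonormalBasis ι ℂ H) (K : Submodule ℂ H) :
    Copyable (⇑e) K ↔ ∃ S : Set ι, K = Submodule.span ℂ (⇑e '' S) := by
  classical
  constructor
  · intro hK
    set P := projL K with hPdef
    set d : ι → ι → ℂ := fun i j => ⟪e j, P (e i)⟫_ℂ with hd
    have key : ∀ i j k, (if j = k then d i j else 0) = d i k * d i j := by
      intro i j k
      have h0 : delta (⇑e) (P (e i)) = P (e i) ⊗ₜ[ℂ] P (e i) := by
        have := LinearMap.congr_fun hK (e i)
        simpa [delta_apply_basis] using this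
      have h1 := congrArg (fun z => (e.toBasis.tensorProduct e.toBasis).repr z (j, k)) h0
      simpa only [coordL, coordR] using h1
    have hval : ∀ i j, d i j = 0 ∨ d i j = 1 := by
      intro i j
      have h := key i j j
      rw [if_pos rfl] at h
      have : d i j * (d i j - 1) = 0 := by linear_combination -h
      rcases mul_eq_zero.mp this with h' | h'
      · exact Or.inl h'
      · exact Or.inr (sub_eq_zero.mp h')
    have hoff : ∀ i j k, j ≠ k → d i k * d i j = 0 := by
      intro i j k hjk
      have h := key i j k
      rwa [if_neg hjk, eq_comm] at h
    have hconj : ∀ i j, d j i = (starRingEnd ℂ) (d i j) := by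
      intro i j
      rw [hd]
      simp only
      rw [← projL_symm K (e i) (e j), ← inner_conj_symm]
    have hdiag0 : ∀ i j, i ≠ j → d i j = 0 := by
      intro i j hij
      by_contra hne
      have h1 : d i j = 1 := (hval i j).resolve_left hne
      have h2 : d j i = 1 := by rw [hconj, h1, map_one]
      have hPi : P (e i) = e j := by
        have := e.sum_repr (P (e i))
        rw [← this, Finset.sum_eq_single j]
        · rw [OrthonormalBasis.repr_apply_apply]
          change d i j • e j = e j
          rw [h1, one_smul]
        · intro m _ hm
          rw [OrthonormalBasis.repr_apply_apply]
          change d i m • e m = 0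
          have := hoff i m j hm
          rw [h1, one_mul] at this
          rw [this, zero_smul]
        · simp
      have hPj : P (e j) = e i := by
        have := e.sum_repr (P (e j))
        rw [← this, Finset.sum_eq_single i]
        · rw [OrthonormalBasis.repr_apply_apply]
          change d j i • e i = e i
          rw [h2, one_smul]
        · intro m _ hm
          rw [OrthonormalBasis.repr_apply_apply]
          change d j m • e m = 0
          have := hoff j m i hm
          rw [h2, one_mul] at this
          rw [this, zero_smul]
        · simp
      have hidem := projL_idem K (e i)
      rw [hPi, hPj] at hidem
      exact hij (e.orthonormal.linearIndependent.injective hidem)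
    set S : Set ι := {i | d i i = 1} with hS
    have hPS : ∀ i, P (e i) = if i ∈ S then e i else 0 := by
      intro i
      have hrepr : P (e i) = d i i • e i := by
        have := e.sum_repr (P (e i))
        rw [← this, Finset.sum_eq_single i]
        · rw [OrthonormalBasis.repr_apply_apply]
        · intro m _ hm
          rw [OrthonormalBasis.repr_apply_apply]
          change d i m • e m = 0
          rw [hdiag0 i m (Ne.symm hm), zero_smul]
        · simp
      by_cases hi : i ∈ S
      · rw [if_pos hi, hrepr, hi, one_smul]
      · have : d i i = 0 := (hval i i).resolve_right hi
        rw [if_neg hi, hrepr, this, zero_smul]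
    refine ⟨S, le_antisymm ?_ ?_⟩
    · intro x hx
      have hx' : x = ∑ i, e.repr x i • P (e i) := by
        have h1 : P x = x := projL_eq_self K hx
        conv_lhs => rw [← h1, ← e.sum_repr x]
        rw [map_sum]
        simp only [map_smul]
      rw [hx']
      refine Submodule.sum_mem _ fun i _ => ?_
      rw [hPS i]
      by_cases hi : i ∈ S
      · rw [if_pos hi]
        exact Submodule.smul_mem _ _ (Submodule.subset_span ⟨i, hi, rfl⟩)
      · rw [if_neg hi, smul_zero]; exact Submodule.zero_mem _
    · rw [Submodule.span_le]
      rintro _ ⟨i, hi, rfl⟩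
      have := hPS i
      rw [if_pos hi] at this
      rw [← this]
      exact projL_mem K (e i)
  · rintro ⟨S, rfl⟩
    classical
    set K := Submodule.span ℂ (⇑e '' S) with hKd
    have hP : ∀ i, projL K (e i) = if i ∈ S then e i else 0 := by
      intro i
      by_cases hi : i ∈ S
      · rw [if_pos hi]
        exact projL_eq_self K (Submodule.subset_span ⟨i, hi, rfl⟩)
      · rw [if_neg hi]
        refine projL_orthogonal K ?_
        rw [Submodule.mem_orthogonal]
        intro u hu
        induction hu using Submodule.span_induction with
        | mem x hx =>
          obtain ⟨j, hj, rfl⟩ := hx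
          rw [orthonormal_iff_ite.mp e.orthonormal]
          simp only [ite_eq_right_iff]
          intro h; exact absurd (h ▸ hj) hi
        | zero => simp
        | add x y _ _ hx hy => rw [inner_add_left, hx, hy, add_zero]
        | smul c x _ hx => rw [inner_smul_left, hx, mul_zero]
    apply e.toBasis.ext
    intro i
    rw [e.coe_toBasis]
    simp only [LinearMap.comp_apply]
    rw [delta_apply_basis, TensorProduct.map_tmul, hP i]
    by_cases hi : i ∈ S
    · rw [if_pos hi, delta_apply_basis]
    · rw [if_neg hi, map_zero, TensorProduct.zero_tmul]

end main


/-- Two classical structures `δ_e` and `δ_f` are partially complementary (no nontrivial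
subspace is copyable along both) if and only if their Boolean algebras of copyable
subspaces (the spans of subsets of the respective bases) are partially complementary
(have trivial intersection). -/
theorem partially_complementary_iff_boolean_partially_complementary
    {ι κ H : Type*} [Fintype ι] [Fintype κ] [NormedAddCommGroup H] [InnerProductSpace ℂ H]
    [FiniteDimensional ℂ H] (e : OrthonormalBasis ι ℂ H) (f : OrthonormalBasis κ ℂ H) :
    (∀ K : Submodule ℂ H, Copyable (⇑e) K → Copyable (⇑f) K → K = ⊥ ∨ K = ⊤) ↔
      (∀ K : Submodule ℂ H,
        (∃ S : Set ι, K = Submodule.span ℂ (⇑e '' S)) →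
        (∃ T : Set κ, K = Submodule.span ℂ (⇑f '' T)) →
        K = ⊥ ∨ K = ⊤) := by
  constructor
  · intro h K hS hT
    exact h K ((copyable_iff_span e K).mpr hS) ((copyable_iff_span f K).mpr hT)
  · intro h K he hf
    exact h K ((copyable_iff_span e K).mp he) ((copyable_iff_span f K).mp hf)
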